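/- Let P = {P_j} be a complete family of orthogonal projectors on an m-dimensional space and T = {T_k} a complete family of orthogonal projectors on an n-dimensional space, and let α ∈ (0,1), z ≥ max{α,1−α}. Then for all density matrices ρ (m×m) and τ (n×n): C_{α,z}(ρ ⊕ τ, P ⊕ T) ≤ C_{α,z}(ρ, P) + C_{α,z}(τ, T), where ρ ⊕ τ is the block-diagonal direct sum, P ⊕ T is the complete projector family on the (m+n)-dimensional direct sum space consisting of the projectors P_j ⊕ 0 and 0 ⊕ T_k, and C_{α,z}(A, M) = 1 − (max_{σ ∈ I_B(M)} Tr[(σ^{(1−α)/(2z)} A^{α/z} σ^{(1−α)/(2z)})^z])^{1/α} is applied to the positive semidefinite matrix A = ρ ⊕ τ with the maximum over block-incoherent density matrices σ for the family M = P ⊕ T. -/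

import Mathlib

open Matrix
open scoped ComplexOrder Classical

namespace BlockCoherence

variable {n : Type*} [Fintype n] [DecidableEq n]

/-- Real part of the trace of a complex matrix. -/
noncomputable def retr (A : Matrix n n ℂ) : ℝ := (Matrix.trace A).re

/-- A density matrix: positive semidefinite with trace 1. -/
def IsDensityMatrix (ρ : Matrix n n ℂ) : Prop := ρ.PosSemidef ∧ Matrix.trace ρ = 1

/-- A complete family of orthogonal projectors. -/
def IsProjFamily {K : Type*} [Fintype K] (P : K → Matrix n n ℂ) : Prop :=
  (∀ k, (P k).IsHermitian) ∧ (∀ k, P k * P k = P k) ∧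
    (∀ j k, j ≠ k → P j * P k = 0) ∧ (∑ k, P k = 1)

/-- Block dephasing map Δ(ρ) = Σ_k P_k ρ P_k. -/
noncomputable def deph {K : Type*} [Fintype K] (P : K → Matrix n n ℂ)
    (ρ : Matrix n n ℂ) : Matrix n n ℂ := ∑ k, P k * ρ * P k

/-- Block incoherent (free) states. -/
def IsBlockIncoherent {K : Type*} [Fintype K] (P : K → Matrix n n ℂ)
    (σ : Matrix n n ℂ) : Prop := IsDensityMatrix σ ∧ σ = deph P σ

/-- A block-incoherent operation presented by its Kraus operators. -/
def IsBIOp {K : Type*} [Fintype K] {N : Type*} [Fintype N]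
    (P : K → Matrix n n ℂ) (Kr : N → Matrix n n ℂ) : Prop :=
  (∑ m, (Kr m)ᴴ * Kr m = 1) ∧
    ∀ (m : N) (i j : K), i ≠ j → ∀ σ, IsBlockIncoherent P σ →
      P i * (Kr m * σ * (Kr m)ᴴ) * P j = 0

/-- The channel determined by Kraus operators. -/
noncomputable def krausApply {N : Type*} [Fintype N]
    (Kr : N → Matrix n n ℂ) (ρ : Matrix n n ℂ) : Matrix n n ℂ :=
  ∑ m, Kr m * ρ * (Kr m)ᴴ

/-- A block coherence measure: conditions (B1)-(B4). -/
structure IsBlockCoherenceMeasure {K : Type*} [Fintype K] (P : K → Matrix n n ℂ)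
    (C : Matrix n n ℂ → ℝ) : Prop where
  nonneg : ∀ ρ, IsDensityMatrix ρ → 0 ≤ C ρ
  eq_zero_iff : ∀ ρ, IsDensityMatrix ρ → (C ρ = 0 ↔ IsBlockIncoherent P ρ)
  monotone : ∀ ρ, IsDensityMatrix ρ → ∀ {N : Type} [Fintype N] (Kr : N → Matrix n n ℂ),
    IsBIOp P Kr → C (krausApply Kr ρ) ≤ C ρ
  strong_monotone : ∀ ρ, IsDensityMatrix ρ → ∀ {N : Type} [Fintype N] (Kr : N → Matrix n n ℂ),
    IsBIOp P Kr →
      ∑ m, (if retr (Kr m * ρ * (Kr m)ᴴ) = 0 then (0 : ℝ) else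
        retr (Kr m * ρ * (Kr m)ᴴ) *
          C ((retr (Kr m * ρ * (Kr m)ᴴ))⁻¹ • (Kr m * ρ * (Kr m)ᴴ))) ≤ C ρ
  convex : ∀ {N : Type} [Fintype N] (p : N → ℝ) (ρs : N → Matrix n n ℂ),
    (∀ m, 0 ≤ p m) → ∑ m, p m = 1 → (∀ m, IsDensityMatrix (ρs m)) →
      C (∑ m, p m • ρs m) ≤ ∑ m, p m * C (ρs m)

/-- Real power of a matrix via the spectral functional calculus (0 on non-Hermitian input). -/
noncomputable def mpow (A : Matrix n n ℂ) (t : ℝ) : Matrix n n ℂ :=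
  if hA : A.IsHermitian then
    (hA.eigenvectorUnitary : Matrix n n ℂ) *
      Matrix.diagonal (fun i => ((hA.eigenvalues i ^ t : ℝ) : ℂ)) *
      (star (hA.eigenvectorUnitary : Matrix n n ℂ))
  else 0

/-- Positive semidefinite square root (0 on non-PSD input). -/
noncomputable def msqrt (A : Matrix n n ℂ) : Matrix n n ℂ :=
  if hA : A.PosSemidef then
    (hA.1.eigenvectorUnitary : Matrix n n ℂ) *
      Matrix.diagonal ((↑) ∘ Real.sqrt ∘ hA.1.eigenvalues) *
      (star hA.1.eigenvectorUnitary : Matrix n n ℂ)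
  else 0

/-- Base-2 matrix logarithm via spectral calculus, with the convention log 0 = 0. -/
noncomputable def mlog2 (A : Matrix n n ℂ) : Matrix n n ℂ :=
  if hA : A.IsHermitian then
    (hA.eigenvectorUnitary : Matrix n n ℂ) *
      Matrix.diagonal (fun i => ((Real.logb 2 (hA.eigenvalues i) : ℝ) : ℂ)) *
      (star (hA.eigenvectorUnitary : Matrix n n ℂ))
  else 0

/-- Trace norm ‖M‖_Tr = Tr √(MᴴM). -/
noncomputable def trNorm (M : Matrix n n ℂ) : ℝ :=
  retr (msqrt (Mᴴ * M))

/-- The α-z Rényi block coherence measure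
`C_{α,z}(ρ,P) = 1 - (max_{σ∈I_B} Tr[(σ^{(1-α)/(2z)} ρ^{α/z} σ^{(1-α)/(2z)})^z])^{1/α}`. -/
noncomputable def Caz {K : Type*} [Fintype K] (α z : ℝ) (P : K → Matrix n n ℂ)
    (ρ : Matrix n n ℂ) : ℝ :=
  1 - (sSup {x : ℝ | ∃ σ, IsBlockIncoherent P σ ∧
    x = retr (mpow (mpow σ ((1 - α) / (2 * z)) * mpow ρ (α / z) *
      mpow σ ((1 - α) / (2 * z))) z)}) ^ (1 / α)

private lemma diagHerm (f : n → ℝ) :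
    (Matrix.diagonal (fun i => ((f i : ℝ) : ℂ))).IsHermitian :=
  Matrix.isHermitian_diagonal_of_self_adjoint _
    (funext fun i => Complex.conj_ofReal (f i))

private lemma mpow_eq_of_decomp {A V : Matrix n n ℂ} (hV : Vᴴ * V = 1)
    (hV' : V * Vᴴ = 1) (d : n → ℝ)
    (hAdef : A = V * Matrix.diagonal (fun i => (d i : ℂ)) * Vᴴ) (t : ℝ) :
    mpow A t = V * Matrix.diagonal (fun i => ((d i ^ t : ℝ) : ℂ)) * Vᴴ := by
  have hA : A.IsHermitian := by
    rw [hAdef]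
    exact Matrix.isHermitian_mul_mul_conjTranspose V (diagHerm d)
  set U : Matrix n n ℂ := (hA.eigenvectorUnitary : Matrix n n ℂ) with hUdef
  have hU : U * Uᴴ = 1 := by
    simpa [Matrix.star_eq_conjTranspose] using
      Matrix.mem_unitaryGroup_iff.mp hA.eigenvectorUnitary.2
  have hU' : Uᴴ * U = 1 := by
    simpa [Matrix.star_eq_conjTranspose] using
      Matrix.mem_unitaryGroup_iff'.mp hA.eigenvectorUnitary.2
  set e := hA.eigenvalues with hedef
  have hspec : A = U * Matrix.diagonal (fun i => ((e i : ℝ) : ℂ)) * Uᴴ := by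
    simpa [Matrix.star_eq_conjTranspose, Function.comp_def] using hA.spectral_theorem
  have hW : (Vᴴ * U) * Matrix.diagonal (fun i => ((e i : ℝ) : ℂ))
      = Matrix.diagonal (fun i => ((d i : ℝ) : ℂ)) * (Vᴴ * U) := by
    have h1 : U * Matrix.diagonal (fun i => ((e i : ℝ) : ℂ)) * Uᴴ
        = V * Matrix.diagonal (fun i => ((d i : ℝ) : ℂ)) * Vᴴ := by
      rw [← hspec, hAdef]
    calc (Vᴴ * U) * Matrix.diagonal (fun i => ((e i : ℝ) : ℂ))
        = Vᴴ * ((U * Matrix.diagonal (fun i => ((e i : ℝ) : ℂ)) * Uᴴ) * U) := by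
          conv_rhs => rw [mul_assoc, hU', mul_one]
          rw [mul_assoc]
      _ = Vᴴ * ((V * Matrix.diagonal (fun i => ((d i : ℝ) : ℂ)) * Vᴴ) * U) := by rw [h1]
      _ = (Vᴴ * V) * Matrix.diagonal (fun i => ((d i : ℝ) : ℂ)) * (Vᴴ * U) := by
          noncomm_ring
      _ = Matrix.diagonal (fun i => ((d i : ℝ) : ℂ)) * (Vᴴ * U) := by rw [hV, one_mul]
  have hWt : (Vᴴ * U) * Matrix.diagonal (fun i => ((e i ^ t : ℝ) : ℂ))
      = Matrix.diagonal (fun i => ((d i ^ t : ℝ) : ℂ)) * (Vᴴ * U) := by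
    ext i j
    have h := congrFun (congrFun hW i) j
    rw [Matrix.mul_diagonal, Matrix.diagonal_mul] at h
    rw [Matrix.mul_diagonal, Matrix.diagonal_mul]
    rcases eq_or_ne ((Vᴴ * U) i j) 0 with h0 | h0
    · simp [h0]
    · have hed : e j = d i := by
        have h2 : (Vᴴ * U) i j * (e j : ℂ) = (Vᴴ * U) i j * (d i : ℂ) := by rw [h]; ring
        exact_mod_cast mul_left_cancel₀ h0 h2
      rw [hed, mul_comm]
  have hstep : mpow A t = U * Matrix.diagonal (fun i => ((e i ^ t : ℝ) : ℂ)) * Uᴴ := by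
    rw [mpow, dif_pos hA]
    simp [Matrix.star_eq_conjTranspose, hUdef, hedef]
  calc mpow A t = U * Matrix.diagonal (fun i => ((e i ^ t : ℝ) : ℂ)) * Uᴴ := hstep
    _ = (V * Vᴴ) * (U * Matrix.diagonal (fun i => ((e i ^ t : ℝ) : ℂ)) * Uᴴ) * (V * Vᴴ) := by
        rw [hV', one_mul, mul_one]
    _ = V * (((Vᴴ * U) * Matrix.diagonal (fun i => ((e i ^ t : ℝ) : ℂ))) * (Uᴴ * V)) * Vᴴ := by
        noncomm_ring
    _ = V * ((Matrix.diagonal (fun i => ((d i ^ t : ℝ) : ℂ)) * (Vᴴ * U)) * (Uᴴ * V)) * Vᴴ := by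
        rw [hWt]
    _ = V * Matrix.diagonal (fun i => ((d i ^ t : ℝ) : ℂ)) * ((Vᴴ * (U * Uᴴ) * V) * Vᴴ) := by
        noncomm_ring
    _ = V * Matrix.diagonal (fun i => ((d i ^ t : ℝ) : ℂ)) * Vᴴ := by
        rw [hU, mul_one, hV, one_mul]
private lemma eig_decomp {A : Matrix n n ℂ} (hA : A.IsHermitian) :
    A = (hA.eigenvectorUnitary : Matrix n n ℂ) *
      Matrix.diagonal (fun i => ((hA.eigenvalues i : ℝ) : ℂ)) *
      (hA.eigenvectorUnitary : Matrix n n ℂ)ᴴ := by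
  simpa [Matrix.star_eq_conjTranspose, Function.comp_def] using hA.spectral_theorem

private lemma eig_unit1 {A : Matrix n n ℂ} (hA : A.IsHermitian) :
    (hA.eigenvectorUnitary : Matrix n n ℂ)ᴴ * (hA.eigenvectorUnitary : Matrix n n ℂ) = 1 := by
  simpa [Matrix.star_eq_conjTranspose] using
    Matrix.mem_unitaryGroup_iff'.mp hA.eigenvectorUnitary.2

private lemma eig_unit2 {A : Matrix n n ℂ} (hA : A.IsHermitian) :
    (hA.eigenvectorUnitary : Matrix n n ℂ) * (hA.eigenvectorUnitary : Matrix n n ℂ)ᴴ = 1 := by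
  simpa [Matrix.star_eq_conjTranspose] using
    Matrix.mem_unitaryGroup_iff.mp hA.eigenvectorUnitary.2

private lemma retr_of_decomp {V : Matrix n n ℂ} (hV : Vᴴ * V = 1) (f : n → ℝ) :
    retr (V * Matrix.diagonal (fun i => ((f i : ℝ) : ℂ)) * Vᴴ) = ∑ i, f i := by
  rw [retr, Matrix.trace_mul_cycle, hV, one_mul, Matrix.trace_diagonal, Complex.re_sum]
  simp

private lemma retr_mpow {A : Matrix n n ℂ} (hA : A.IsHermitian) (t : ℝ) :
    retr (mpow A t) = ∑ i, hA.eigenvalues i ^ t := by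
  rw [mpow_eq_of_decomp (eig_unit1 hA) (eig_unit2 hA) _ (eig_decomp hA) t,
    retr_of_decomp (eig_unit1 hA)]

private lemma mpow_isHermitian {A : Matrix n n ℂ} (hA : A.IsHermitian) (t : ℝ) :
    (mpow A t).IsHermitian := by
  rw [mpow_eq_of_decomp (eig_unit1 hA) (eig_unit2 hA) _ (eig_decomp hA) t]
  exact Matrix.isHermitian_mul_mul_conjTranspose _ (diagHerm _)

private lemma mpow_posSemidef {A : Matrix n n ℂ} (hA : A.PosSemidef) (t : ℝ) :
    (mpow A t).PosSemidef := by
  rw [mpow_eq_of_decomp (eig_unit1 hA.1) (eig_unit2 hA.1) _ (eig_decomp hA.1) t]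
  exact (Matrix.posSemidef_diagonal_iff.mpr fun i =>
    Complex.zero_le_real.mpr (Real.rpow_nonneg (hA.eigenvalues_nonneg i) t)
    ).mul_mul_conjTranspose_same _

private lemma retr_mpow_nonneg {A : Matrix n n ℂ} (hA : A.PosSemidef) (t : ℝ) :
    0 ≤ retr (mpow A t) := by
  rw [retr_mpow hA.1 t]
  exact Finset.sum_nonneg fun i _ => Real.rpow_nonneg (hA.eigenvalues_nonneg i) t

private lemma herm_real_smul {A : Matrix n n ℂ} (hA : A.IsHermitian) (c : ℝ) :
    ((c : ℂ) • A).IsHermitian := by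
  rw [Matrix.IsHermitian, Matrix.conjTranspose_smul, hA.eq, Complex.star_def,
    Complex.conj_ofReal]

private lemma posSemidef_real_smul {A : Matrix n n ℂ} (hA : A.PosSemidef) {c : ℝ}
    (hc : 0 ≤ c) : ((c : ℂ) • A).PosSemidef := by
  have key : ((Real.sqrt c : ℂ) • (1 : Matrix n n ℂ)) * A *
      ((Real.sqrt c : ℂ) • (1 : Matrix n n ℂ))ᴴ = (c : ℂ) • A := by
    rw [Matrix.conjTranspose_smul, Matrix.conjTranspose_one, Complex.star_def,
      Complex.conj_ofReal]
    rw [Matrix.smul_mul, Matrix.one_mul, Matrix.mul_smul, Matrix.mul_one, smul_smul,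
      ← Complex.ofReal_mul, Real.mul_self_sqrt hc]
  rw [← key]
  exact hA.mul_mul_conjTranspose_same _

private lemma mpow_real_smul {A : Matrix n n ℂ} (hA : A.PosSemidef) {c : ℝ}
    (hc : 0 ≤ c) (t : ℝ) :
    mpow ((c : ℂ) • A) t = ((c ^ t : ℝ) : ℂ) • mpow A t := by
  have hdec : (c : ℂ) • A = (hA.1.eigenvectorUnitary : Matrix n n ℂ) *
      Matrix.diagonal (fun i => ((c * hA.1.eigenvalues i : ℝ) : ℂ)) *
      (hA.1.eigenvectorUnitary : Matrix n n ℂ)ᴴ := by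
    conv_lhs => rw [eig_decomp hA.1]
    have hfun : ((c : ℂ) • fun i => ((hA.1.eigenvalues i : ℝ) : ℂ))
        = fun i => ((c * hA.1.eigenvalues i : ℝ) : ℂ) := by
      funext i
      simp [Pi.smul_apply, smul_eq_mul]
    rw [← Matrix.smul_mul, ← Matrix.mul_smul, ← Matrix.diagonal_smul, hfun]
  rw [mpow_eq_of_decomp (eig_unit1 hA.1) (eig_unit2 hA.1) _ hdec t,
    mpow_eq_of_decomp (eig_unit1 hA.1) (eig_unit2 hA.1) _ (eig_decomp hA.1) t]
  have hfun2 : (((c ^ t : ℝ) : ℂ) • fun i => ((hA.1.eigenvalues i ^ t : ℝ) : ℂ))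
      = fun i => (((c * hA.1.eigenvalues i) ^ t : ℝ) : ℂ) := by
    funext i
    rw [Real.mul_rpow hc (hA.eigenvalues_nonneg i)]
    simp [Pi.smul_apply, smul_eq_mul]
  rw [← Matrix.smul_mul, ← Matrix.mul_smul, ← Matrix.diagonal_smul, hfun2]
private lemma sum_eigenvalues_eq_retr {A : Matrix n n ℂ} (hA : A.IsHermitian) :
    ∑ i, hA.eigenvalues i = retr A := by
  have h := retr_of_decomp (eig_unit1 hA) hA.eigenvalues
  rw [← eig_decomp hA] at h
  exact h.symm

private lemma retr_psd_nonneg {A : Matrix n n ℂ} (hA : A.PosSemidef) : 0 ≤ retr A := by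
  rw [← sum_eigenvalues_eq_retr hA.1]
  exact Finset.sum_nonneg fun i _ => hA.eigenvalues_nonneg i

private lemma eigenvalue_le_retr {A : Matrix n n ℂ} (hA : A.PosSemidef) (i : n) :
    hA.1.eigenvalues i ≤ retr A := by
  rw [← sum_eigenvalues_eq_retr hA.1]
  exact Finset.single_le_sum (fun j _ => hA.eigenvalues_nonneg j) (Finset.mem_univ i)

private lemma one_sub_mpow_mul_self {A : Matrix n n ℂ} (hA : A.PosSemidef)
    (htr : Matrix.trace A = 1) {t : ℝ} (ht : 0 ≤ t) :
    ((1 : Matrix n n ℂ) - mpow A t * mpow A t).PosSemidef := by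
  have hretr : retr A = 1 := by rw [retr, htr]; rfl
  have hle1 : ∀ i, hA.1.eigenvalues i ≤ 1 := fun i => (eigenvalue_le_retr hA i).trans_eq hretr
  set U := (hA.1.eigenvectorUnitary : Matrix n n ℂ) with hU
  rw [mpow_eq_of_decomp (eig_unit1 hA.1) (eig_unit2 hA.1) _ (eig_decomp hA.1) t]
  have hsq : (U * Matrix.diagonal (fun i => ((hA.1.eigenvalues i ^ t : ℝ) : ℂ)) * Uᴴ) *
      (U * Matrix.diagonal (fun i => ((hA.1.eigenvalues i ^ t : ℝ) : ℂ)) * Uᴴ)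
      = U * Matrix.diagonal (fun i =>
          ((hA.1.eigenvalues i ^ t * (hA.1.eigenvalues i ^ t) : ℝ) : ℂ)) * Uᴴ := by
    calc (U * Matrix.diagonal (fun i => ((hA.1.eigenvalues i ^ t : ℝ) : ℂ)) * Uᴴ) *
        (U * Matrix.diagonal (fun i => ((hA.1.eigenvalues i ^ t : ℝ) : ℂ)) * Uᴴ)
        = U * (Matrix.diagonal (fun i => ((hA.1.eigenvalues i ^ t : ℝ) : ℂ)) * (Uᴴ * U) *
            Matrix.diagonal (fun i => ((hA.1.eigenvalues i ^ t : ℝ) : ℂ))) * Uᴴ := by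
          noncomm_ring
      _ = U * Matrix.diagonal (fun i =>
            ((hA.1.eigenvalues i ^ t * (hA.1.eigenvalues i ^ t) : ℝ) : ℂ)) * Uᴴ := by
          rw [eig_unit1 hA.1, mul_one, Matrix.diagonal_mul_diagonal]
          push_cast
          rfl
  rw [hsq]
  have hone : (1 : Matrix n n ℂ) = U * Matrix.diagonal (fun _ : n => (1 : ℂ)) * Uᴴ := by
    rw [Matrix.diagonal_one, Matrix.mul_one, eig_unit2 hA.1]
  rw [hone, ← Matrix.sub_mul, ← Matrix.mul_sub, Matrix.diagonal_sub]
  refine Matrix.PosSemidef.mul_mul_conjTranspose_same ?_ U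
  refine Matrix.posSemidef_diagonal_iff.mpr fun i => ?_
  have h1 : hA.1.eigenvalues i ^ t ≤ 1 :=
    Real.rpow_le_one (hA.eigenvalues_nonneg i) (hle1 i) ht
  have h0 : 0 ≤ hA.1.eigenvalues i ^ t := Real.rpow_nonneg (hA.eigenvalues_nonneg i) t
  have : ((1 : ℂ) - ((hA.1.eigenvalues i ^ t * hA.1.eigenvalues i ^ t : ℝ) : ℂ))
      = (((1 - hA.1.eigenvalues i ^ t * hA.1.eigenvalues i ^ t : ℝ)) : ℂ) := by push_cast; ring
  rw [this]
  rw [Complex.zero_le_real]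
  nlinarith

private lemma retr_smul (c : ℝ) (A : Matrix n n ℂ) :
    retr ((c : ℂ) • A) = c * retr A := by
  rw [retr, Matrix.trace_smul, retr]
  simp [smul_eq_mul, Complex.mul_re]

private lemma deph_smul {K : Type*} [Fintype K] (P : K → Matrix n n ℂ) (c : ℂ)
    (σ : Matrix n n ℂ) : deph P (c • σ) = c • deph P σ := by
  simp [deph, Finset.smul_sum, Matrix.mul_smul, Matrix.smul_mul]

private lemma deph_one {K : Type*} [Fintype K] {P : K → Matrix n n ℂ}
    (hP : IsProjFamily P) : deph P (1 : Matrix n n ℂ) = 1 := by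
  simp only [deph, Matrix.mul_one, hP.2.1]
  exact hP.2.2.2

private lemma unif_incoherent {K : Type*} [Fintype K] {P : K → Matrix n n ℂ}
    (hP : IsProjFamily P) (hcard : 0 < Fintype.card n) :
    IsBlockIncoherent P ((((Fintype.card n : ℝ)⁻¹ : ℝ) : ℂ) • 1) := by
  refine ⟨⟨posSemidef_real_smul Matrix.PosSemidef.one (by positivity), ?_⟩, ?_⟩
  · rw [Matrix.trace_smul, Matrix.trace_one, smul_eq_mul]
    rw [Complex.ofReal_inv]
    have hcc : ((Fintype.card n : ℝ) : ℂ) = (Fintype.card n : ℂ) := by push_cast; ring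
    rw [hcc, inv_mul_cancel₀ (Nat.cast_ne_zero.mpr hcard.ne')]
  · rw [deph_smul, deph_one hP]
private lemma mpow_half_mul_self {A : Matrix n n ℂ} (hA : A.PosSemidef) :
    mpow A (1 / 2) * mpow A (1 / 2) = A := by
  rw [mpow_eq_of_decomp (eig_unit1 hA.1) (eig_unit2 hA.1) _ (eig_decomp hA.1)]
  set U := (hA.1.eigenvectorUnitary : Matrix n n ℂ) with hU
  conv_rhs => rw [eig_decomp hA.1]
  calc U * Matrix.diagonal (fun i => ((hA.1.eigenvalues i ^ (1 / 2 : ℝ) : ℝ) : ℂ)) * Uᴴ *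
        (U * Matrix.diagonal (fun i => ((hA.1.eigenvalues i ^ (1 / 2 : ℝ) : ℝ) : ℂ)) * Uᴴ)
      = U * (Matrix.diagonal (fun i => ((hA.1.eigenvalues i ^ (1 / 2 : ℝ) : ℝ) : ℂ)) * (Uᴴ * U) *
          Matrix.diagonal (fun i => ((hA.1.eigenvalues i ^ (1 / 2 : ℝ) : ℝ) : ℂ))) * Uᴴ := by
        noncomm_ring
    _ = U * Matrix.diagonal (fun i => ((hA.1.eigenvalues i : ℝ) : ℂ)) * Uᴴ := by
        rw [eig_unit1 hA.1, mul_one, Matrix.diagonal_mul_diagonal]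
        have h : ∀ i, ((hA.1.eigenvalues i ^ (1 / 2 : ℝ) : ℝ) : ℂ) *
            ((hA.1.eigenvalues i ^ (1 / 2 : ℝ) : ℝ) : ℂ) = ((hA.1.eigenvalues i : ℝ) : ℂ) := by
          intro i
          rw [← Complex.ofReal_mul, ← Real.sqrt_eq_rpow,
            Real.mul_self_sqrt (hA.eigenvalues_nonneg i)]
        simp only [h]
private lemma Q_bounds {ρ σ : Matrix n n ℂ} (hρ : ρ.PosSemidef)
    {α z : ℝ} (hα : α ∈ Set.Ioo (0 : ℝ) 1) (hz : max α (1 - α) ≤ z)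
    (hσp : σ.PosSemidef) (hσt : Matrix.trace σ = 1) :
    0 ≤ retr (mpow (mpow σ ((1 - α) / (2 * z)) * mpow ρ (α / z) *
        mpow σ ((1 - α) / (2 * z))) z) ∧
    retr (mpow (mpow σ ((1 - α) / (2 * z)) * mpow ρ (α / z) *
        mpow σ ((1 - α) / (2 * z))) z)
      ≤ (Fintype.card n : ℝ) * (retr (mpow ρ (α / z))) ^ z := by
  have hz0 : 0 < z := lt_of_lt_of_le hα.1 ((le_max_left _ _).trans hz)
  have ht0 : (0 : ℝ) ≤ (1 - α) / (2 * z) := by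
    apply div_nonneg (by linarith [hα.2]) (by linarith)
  set t := (1 - α) / (2 * z) with htdef
  set A := mpow σ t with hAdef
  set ρ' := mpow ρ (α / z) with hρ'def
  have hApsd : A.PosSemidef := mpow_posSemidef hσp t
  have hρ'psd : ρ'.PosSemidef := mpow_posSemidef hρ (α / z)
  have hM : (A * ρ' * A).PosSemidef := by
    have h := hρ'psd.mul_mul_conjTranspose_same A
    rwa [hApsd.1.eq] at h
  have htrace : retr (A * ρ' * A) ≤ retr ρ' := by
    set S := mpow ρ' (1 / 2) with hSdef
    have hSS : S * S = ρ' := mpow_half_mul_self hρ'psd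
    have hSh : Sᴴ = S := mpow_isHermitian hρ'psd.1 (1 / 2)
    have h1 : Matrix.trace (A * ρ' * A) = Matrix.trace (S * (A * A) * S) := by
      rw [Matrix.trace_mul_cycle]
      conv_lhs => rw [← hSS, ← mul_assoc]
      rw [Matrix.trace_mul_comm, ← mul_assoc]
    have h2 := one_sub_mpow_mul_self hσp hσt ht0
    rw [← hAdef] at h2
    have hdpsd : (S * ((1 : Matrix n n ℂ) - A * A) * S).PosSemidef := by
      have h3 := h2.mul_mul_conjTranspose_same S
      rwa [hSh] at h3
    have hdiff : ρ' - S * (A * A) * S = S * ((1 : Matrix n n ℂ) - A * A) * S := by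
      rw [Matrix.mul_sub, Matrix.mul_one, Matrix.sub_mul, hSS]
    have h4 : 0 ≤ retr ρ' - retr (S * (A * A) * S) := by
      have h5 := retr_psd_nonneg hdpsd
      rw [← hdiff, retr, Matrix.trace_sub, Complex.sub_re] at h5
      exact h5
    have h6 : retr (A * ρ' * A) = retr (S * (A * A) * S) := by
      rw [retr, retr, h1]
    linarith
  constructor
  · rw [retr_mpow hM.1 z]
    exact Finset.sum_nonneg fun i _ => Real.rpow_nonneg (hM.eigenvalues_nonneg i) z
  · rw [retr_mpow hM.1 z]
    calc ∑ i, hM.1.eigenvalues i ^ z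
        ≤ ∑ _i : n, (retr ρ') ^ z := by
          refine Finset.sum_le_sum fun i _ => ?_
          exact Real.rpow_le_rpow (hM.eigenvalues_nonneg i)
            ((eigenvalue_le_retr hM i).trans htrace) hz0.le
      _ = (Fintype.card n : ℝ) * (retr ρ') ^ z := by
          rw [Finset.sum_const, Finset.card_univ, nsmul_eq_mul]
section Blocks

variable {m' p' : Type*} [Fintype m'] [DecidableEq m'] [Fintype p'] [DecidableEq p']

private lemma fromBlocks_mul_fromBlocks (A C : Matrix m' m' ℂ) (B D : Matrix p' p' ℂ) :
    Matrix.fromBlocks A 0 0 B * Matrix.fromBlocks C 0 0 D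
      = Matrix.fromBlocks (A * C) 0 0 (B * D) := by
  rw [Matrix.fromBlocks_multiply]
  simp

private lemma posSemidef_fromBlocks {A : Matrix m' m' ℂ} {B : Matrix p' p' ℂ}
    (hA : A.PosSemidef) (hB : B.PosSemidef) :
    (Matrix.fromBlocks A 0 0 B).PosSemidef := by
  obtain ⟨A', hA'⟩ : ∃ A' : Matrix m' m' ℂ, A = A'ᴴ * A' :=
    ⟨mpow A (1 / 2), by rw [(mpow_isHermitian hA.1 _).eq, mpow_half_mul_self hA]⟩
  obtain ⟨B', hB'⟩ : ∃ B' : Matrix p' p' ℂ, B = B'ᴴ * B' :=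
    ⟨mpow B (1 / 2), by rw [(mpow_isHermitian hB.1 _).eq, mpow_half_mul_self hB]⟩
  have : Matrix.fromBlocks A 0 0 B
      = (Matrix.fromBlocks A' 0 0 B')ᴴ * (Matrix.fromBlocks A' 0 0 B') := by
    rw [Matrix.fromBlocks_conjTranspose, Matrix.conjTranspose_zero,
      Matrix.conjTranspose_zero, fromBlocks_mul_fromBlocks, ← hA', ← hB']
  rw [this]
  exact Matrix.posSemidef_conjTranspose_mul_self _

private lemma trace_fromBlocks (A : Matrix m' m' ℂ) (B : Matrix p' p' ℂ) :
    Matrix.trace (Matrix.fromBlocks A 0 0 B) = Matrix.trace A + Matrix.trace B := by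
  simp [Matrix.trace, Fintype.sum_sum_type, Matrix.diag]

private lemma retr_fromBlocks (A : Matrix m' m' ℂ) (B : Matrix p' p' ℂ) :
    retr (Matrix.fromBlocks A 0 0 B) = retr A + retr B := by
  rw [retr, trace_fromBlocks, Complex.add_re, retr, retr]

private lemma fromBlocks_sum {K : Type*} [Fintype K] (f : K → Matrix m' m' ℂ)
    (g : K → Matrix p' p' ℂ) :
    ∑ j, Matrix.fromBlocks (f j) (0 : Matrix m' p' ℂ) (0 : Matrix p' m' ℂ) (g j)
      = Matrix.fromBlocks (∑ j, f j) 0 0 (∑ j, g j) := by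
  ext i k
  cases i <;> cases k <;> simp [Matrix.sum_apply]

private lemma mpow_fromBlocks {A : Matrix m' m' ℂ} {B : Matrix p' p' ℂ}
    (hA : A.IsHermitian) (hB : B.IsHermitian) (t : ℝ) :
    mpow (Matrix.fromBlocks A 0 0 B) t
      = Matrix.fromBlocks (mpow A t) 0 0 (mpow B t) := by
  set U₁ := (hA.eigenvectorUnitary : Matrix m' m' ℂ) with hU₁
  set U₂ := (hB.eigenvectorUnitary : Matrix p' p' ℂ) with hU₂
  set V := Matrix.fromBlocks U₁ 0 0 U₂ with hVdef
  have hVct : Vᴴ = Matrix.fromBlocks U₁ᴴ 0 0 U₂ᴴ := by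
    rw [hVdef, Matrix.fromBlocks_conjTranspose]
    simp
  have hV1 : Vᴴ * V = 1 := by
    rw [hVct, hVdef, fromBlocks_mul_fromBlocks, eig_unit1 hA, eig_unit1 hB,
      Matrix.fromBlocks_one]
  have hV2 : V * Vᴴ = 1 := by
    rw [hVct, hVdef, fromBlocks_mul_fromBlocks, eig_unit2 hA, eig_unit2 hB,
      Matrix.fromBlocks_one]
  have hcoe : ∀ (f : m' → ℝ) (g : p' → ℝ),
      (fun i => ((Sum.elim f g i : ℝ) : ℂ))
        = Sum.elim (fun i => ((f i : ℝ) : ℂ)) (fun i => ((g i : ℝ) : ℂ)) := by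
    intro f g
    funext i
    cases i <;> rfl
  have hdec : Matrix.fromBlocks A 0 0 B
      = V * Matrix.diagonal
          (fun i => ((Sum.elim hA.eigenvalues hB.eigenvalues i : ℝ) : ℂ)) * Vᴴ := by
    rw [hcoe, ← Matrix.fromBlocks_diagonal, hVct, hVdef, fromBlocks_mul_fromBlocks,
      fromBlocks_mul_fromBlocks, ← eig_decomp hA, ← eig_decomp hB]
  rw [mpow_eq_of_decomp hV1 hV2 _ hdec t]
  have hcoet : (fun i => ((Sum.elim hA.eigenvalues hB.eigenvalues i ^ t : ℝ) : ℂ))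
      = Sum.elim (fun i => ((hA.eigenvalues i ^ t : ℝ) : ℂ))
          (fun i => ((hB.eigenvalues i ^ t : ℝ) : ℂ)) := by
    funext i
    cases i <;> rfl
  rw [hcoet, ← Matrix.fromBlocks_diagonal, hVct, hVdef, fromBlocks_mul_fromBlocks,
    fromBlocks_mul_fromBlocks,
    mpow_eq_of_decomp (eig_unit1 hA) (eig_unit2 hA) _ (eig_decomp hA) t,
    mpow_eq_of_decomp (eig_unit1 hB) (eig_unit2 hB) _ (eig_decomp hB) t]

end Blocks
section Mix

variable {m' p' : Type*} [Fintype m'] [DecidableEq m'] [Fintype p'] [DecidableEq p']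

private lemma sumfam_proj {K L : Type*} [Fintype K] [Fintype L]
    {P : K → Matrix m' m' ℂ} (hP : IsProjFamily P)
    {T : L → Matrix p' p' ℂ} (hT : IsProjFamily T) :
    IsProjFamily (Sum.elim (fun j : K => Matrix.fromBlocks (P j) 0 0 0)
      (fun k : L => Matrix.fromBlocks 0 0 0 (T k))) := by
  obtain ⟨hP1, hP2, hP3, hP4⟩ := hP
  obtain ⟨hT1, hT2, hT3, hT4⟩ := hT
  refine ⟨?_, ?_, ?_, ?_⟩
  · rintro (j | k)
    · show (Matrix.fromBlocks (P j) 0 0 0)ᴴ = _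
      rw [Matrix.fromBlocks_conjTranspose]
      simp [(hP1 j).eq]
    · show (Matrix.fromBlocks 0 0 0 (T k))ᴴ = _
      rw [Matrix.fromBlocks_conjTranspose]
      simp [(hT1 k).eq]
  · rintro (j | k)
    · show Matrix.fromBlocks (P j) 0 0 0 * Matrix.fromBlocks (P j) 0 0 0 = _
      rw [fromBlocks_mul_fromBlocks, hP2 j]
      simp
    · show Matrix.fromBlocks 0 0 0 (T k) * Matrix.fromBlocks 0 0 0 (T k) = _
      rw [fromBlocks_mul_fromBlocks, hT2 k]
      simp
  · rintro (j | k) (j' | k') hne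
    · have hjj : j ≠ j' := fun h => hne (by rw [h])
      show Matrix.fromBlocks (P j) 0 0 0 * Matrix.fromBlocks (P j') 0 0 0 = 0
      rw [fromBlocks_mul_fromBlocks, hP3 j j' hjj]
      simp
    · show Matrix.fromBlocks (P j) 0 0 0 * Matrix.fromBlocks 0 0 0 (T k') = 0
      rw [fromBlocks_mul_fromBlocks]
      simp
    · show Matrix.fromBlocks 0 0 0 (T k) * Matrix.fromBlocks (P j') 0 0 0 = 0
      rw [fromBlocks_mul_fromBlocks]
      simp
    · have hkk : k ≠ k' := fun h => hne (by rw [h])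
      show Matrix.fromBlocks 0 0 0 (T k) * Matrix.fromBlocks 0 0 0 (T k') = 0
      rw [fromBlocks_mul_fromBlocks, hT3 k k' hkk]
      simp
  · rw [Fintype.sum_sum_type]
    simp only [Sum.elim_inl, Sum.elim_inr]
    rw [fromBlocks_sum, fromBlocks_sum, hP4, hT4, Matrix.fromBlocks_add]
    simp only [Finset.sum_const_zero, add_zero, zero_add]
    exact Matrix.fromBlocks_one

private lemma deph_sumfam {K L : Type*} [Fintype K] [Fintype L]
    (P : K → Matrix m' m' ℂ) (T : L → Matrix p' p' ℂ)
    (X : Matrix m' m' ℂ) (Y : Matrix p' p' ℂ) :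
    deph (Sum.elim (fun j : K => Matrix.fromBlocks (P j) 0 0 0)
        (fun k : L => Matrix.fromBlocks 0 0 0 (T k)))
      (Matrix.fromBlocks X 0 0 Y)
      = Matrix.fromBlocks (deph P X) 0 0 (deph T Y) := by
  rw [deph, Fintype.sum_sum_type]
  simp only [Sum.elim_inl, Sum.elim_inr]
  have h₁ : ∀ j : K, Matrix.fromBlocks (P j) 0 0 0 * Matrix.fromBlocks X 0 0 Y *
      Matrix.fromBlocks (P j) 0 0 0
      = Matrix.fromBlocks (P j * X * P j) (0 : Matrix m' p' ℂ) (0 : Matrix p' m' ℂ) 0 := by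
    intro j
    rw [fromBlocks_mul_fromBlocks, fromBlocks_mul_fromBlocks]
    simp
  have h₂ : ∀ k : L, Matrix.fromBlocks 0 0 0 (T k) * Matrix.fromBlocks X 0 0 Y *
      Matrix.fromBlocks 0 0 0 (T k)
      = Matrix.fromBlocks (0 : Matrix m' m' ℂ) (0 : Matrix m' p' ℂ) (0 : Matrix p' m' ℂ)
          (T k * Y * T k) := by
    intro k
    rw [fromBlocks_mul_fromBlocks, fromBlocks_mul_fromBlocks]
    simp
  rw [Finset.sum_congr rfl fun j _ => h₁ j, Finset.sum_congr rfl fun k _ => h₂ k,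
    fromBlocks_sum, fromBlocks_sum, Matrix.fromBlocks_add]
  simp only [Finset.sum_const_zero, add_zero, zero_add]
  rfl

private lemma mix_incoherent {K L : Type*} [Fintype K] [Fintype L]
    {P : K → Matrix m' m' ℂ} {T : L → Matrix p' p' ℂ}
    {σ₁ : Matrix m' m' ℂ} (h₁ : IsBlockIncoherent P σ₁)
    {σ₂ : Matrix p' p' ℂ} (h₂ : IsBlockIncoherent T σ₂)
    {l : ℝ} (hl0 : 0 ≤ l) (hl1 : l ≤ 1) :
    IsBlockIncoherent (Sum.elim (fun j : K => Matrix.fromBlocks (P j) 0 0 0)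
        (fun k : L => Matrix.fromBlocks 0 0 0 (T k)))
      (Matrix.fromBlocks ((l : ℂ) • σ₁) 0 0 (((1 - l : ℝ) : ℂ) • σ₂)) := by
  refine ⟨⟨posSemidef_fromBlocks (posSemidef_real_smul h₁.1.1 hl0)
      (posSemidef_real_smul h₂.1.1 (by linarith)), ?_⟩, ?_⟩
  · rw [trace_fromBlocks, Matrix.trace_smul, Matrix.trace_smul, h₁.1.2, h₂.1.2]
    simp only [smul_eq_mul, mul_one]
    push_cast
    ring
  · rw [deph_sumfam, deph_smul, deph_smul, ← h₁.2, ← h₂.2]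

private lemma Q_mix
    {α z : ℝ} (hα : α ∈ Set.Ioo (0 : ℝ) 1) (hz : max α (1 - α) ≤ z)
    {ρ : Matrix m' m' ℂ} (hρ : ρ.PosSemidef) {τ : Matrix p' p' ℂ} (hτ : τ.PosSemidef)
    {σ₁ : Matrix m' m' ℂ} (h₁ : σ₁.PosSemidef)
    {σ₂ : Matrix p' p' ℂ} (h₂ : σ₂.PosSemidef)
    {l : ℝ} (hl0 : 0 ≤ l) (hl1 : l ≤ 1) :
    retr (mpow (mpow (Matrix.fromBlocks ((l : ℂ) • σ₁) 0 0 (((1 - l : ℝ) : ℂ) • σ₂))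
        ((1 - α) / (2 * z)) *
      mpow (Matrix.fromBlocks ρ 0 0 τ) (α / z) *
      mpow (Matrix.fromBlocks ((l : ℂ) • σ₁) 0 0 (((1 - l : ℝ) : ℂ) • σ₂))
        ((1 - α) / (2 * z))) z)
    = l ^ (1 - α) *
        retr (mpow (mpow σ₁ ((1 - α) / (2 * z)) * mpow ρ (α / z) *
          mpow σ₁ ((1 - α) / (2 * z))) z)
      + (1 - l) ^ (1 - α) *
        retr (mpow (mpow σ₂ ((1 - α) / (2 * z)) * mpow τ (α / z) *
          mpow σ₂ ((1 - α) / (2 * z))) z) := by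
  have hz0 : 0 < z := lt_of_lt_of_le hα.1 ((le_max_left _ _).trans hz)
  have h1a : (0 : ℝ) < 1 - α := by linarith [hα.2]
  have hl0' : (0 : ℝ) ≤ 1 - l := by linarith
  set t := (1 - α) / (2 * z) with htdef
  set s := α / z with hsdef
  have hsig : mpow (Matrix.fromBlocks ((l : ℂ) • σ₁) 0 0 (((1 - l : ℝ) : ℂ) • σ₂)) t
      = Matrix.fromBlocks (((l ^ t : ℝ) : ℂ) • mpow σ₁ t) 0 0
          ((((1 - l) ^ t : ℝ) : ℂ) • mpow σ₂ t) := by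
    rw [mpow_fromBlocks (herm_real_smul h₁.1 l) (herm_real_smul h₂.1 (1 - l)) t,
      mpow_real_smul h₁ hl0 t, mpow_real_smul h₂ hl0' t]
  have hρτ : mpow (Matrix.fromBlocks ρ 0 0 τ) s
      = Matrix.fromBlocks (mpow ρ s) 0 0 (mpow τ s) := mpow_fromBlocks hρ.1 hτ.1 s
  have hprod : ∀ (c : ℝ) (A R : Matrix m' m' ℂ),
      ((c : ℂ) • A) * R * ((c : ℂ) • A) = ((c * c : ℝ) : ℂ) • (A * R * A) := by
    intro c A R
    rw [Matrix.smul_mul, Matrix.smul_mul, Matrix.mul_smul, smul_smul, Complex.ofReal_mul]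
  have hprod' : ∀ (c : ℝ) (A R : Matrix p' p' ℂ),
      ((c : ℂ) • A) * R * ((c : ℂ) • A) = ((c * c : ℝ) : ℂ) • (A * R * A) := by
    intro c A R
    rw [Matrix.smul_mul, Matrix.smul_mul, Matrix.mul_smul, smul_smul, Complex.ofReal_mul]
  have hM₁ : (mpow σ₁ t * mpow ρ s * mpow σ₁ t).PosSemidef := by
    have h := (mpow_posSemidef hρ s).mul_mul_conjTranspose_same (mpow σ₁ t)
    rwa [(mpow_posSemidef h₁ t).1.eq] at h
  have hM₂ : (mpow σ₂ t * mpow τ s * mpow σ₂ t).PosSemidef := by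
    have h := (mpow_posSemidef hτ s).mul_mul_conjTranspose_same (mpow σ₂ t)
    rwa [(mpow_posSemidef h₂ t).1.eq] at h
  have hzne : z ≠ 0 := hz0.ne'
  have ht_pos : 0 < t := by
    rw [htdef]
    exact div_pos h1a (by linarith)
  have htt : ∀ x : ℝ, 0 ≤ x → x ^ t * x ^ t = x ^ ((1 - α) / z) := by
    intro x hx
    rw [← Real.rpow_add' hx (ne_of_gt (by linarith : (0 : ℝ) < t + t))]
    congr 1
    rw [htdef]
    field_simp
    ring
  have hzz : ∀ x : ℝ, 0 ≤ x → (x ^ ((1 - α) / z)) ^ z = x ^ (1 - α) := by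
    intro x hx
    rw [← Real.rpow_mul hx, div_mul_cancel₀ _ hzne]
  rw [hsig, hρτ, fromBlocks_mul_fromBlocks, fromBlocks_mul_fromBlocks, hprod, hprod',
    htt l hl0, htt (1 - l) hl0']
  rw [mpow_fromBlocks (herm_real_smul hM₁.1 _) (herm_real_smul hM₂.1 _) z,
    mpow_real_smul hM₁ (Real.rpow_nonneg hl0 _) z,
    mpow_real_smul hM₂ (Real.rpow_nonneg hl0' _) z,
    retr_fromBlocks, retr_smul, retr_smul, hzz l hl0, hzz (1 - l) hl0']

end Mix

/-- `C_{α,z}` is subadditive with respect to direct sums: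
`C_{α,z}(ρ ⊕ τ, P ⊕ T) ≤ C_{α,z}(ρ,P) + C_{α,z}(τ,T)`. -/
theorem Caz_directSum_subadditive
    {m p K L : Type*} [Fintype m] [DecidableEq m] [Fintype p] [DecidableEq p]
    [Fintype K] [Fintype L]
    (P : K → Matrix m m ℂ) (hP : IsProjFamily P)
    (T : L → Matrix p p ℂ) (hT : IsProjFamily T)
    (α z : ℝ) (hα : α ∈ Set.Ioo (0 : ℝ) 1) (hz : max α (1 - α) ≤ z)
    (ρ : Matrix m m ℂ) (hρ : IsDensityMatrix ρ)
    (τ : Matrix p p ℂ) (hτ : IsDensityMatrix τ) :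
    Caz α z
        (Sum.elim (fun j : K => Matrix.fromBlocks (P j) 0 0 0)
          (fun k : L => Matrix.fromBlocks 0 0 0 (T k)))
        (Matrix.fromBlocks ρ 0 0 τ) ≤
      Caz α z P ρ + Caz α z T τ := by
  have hα0 : 0 < α := hα.1
  have h1a : (0 : ℝ) < 1 - α := by linarith [hα.2]
  have hz0 : 0 < z := lt_of_lt_of_le hα0 ((le_max_left _ _).trans hz)
  have hρτ : (Matrix.fromBlocks ρ 0 0 τ).PosSemidef := posSemidef_fromBlocks hρ.1 hτ.1
  have hm : 0 < Fintype.card m := by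
    rcases Nat.eq_zero_or_pos (Fintype.card m) with h | h
    · exfalso
      have hemp : IsEmpty m := Fintype.card_eq_zero_iff.mp h
      have h0 : Matrix.trace ρ = 0 := by
        rw [Matrix.trace]
        exact Finset.sum_of_isEmpty _
      rw [hρ.2] at h0
      exact one_ne_zero h0
    · exact h
  have hpp : 0 < Fintype.card p := by
    rcases Nat.eq_zero_or_pos (Fintype.card p) with h | h
    · exfalso
      have hemp : IsEmpty p := Fintype.card_eq_zero_iff.mp h
      have h0 : Matrix.trace τ = 0 := by
        rw [Matrix.trace]
        exact Finset.sum_of_isEmpty _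
      rw [hτ.2] at h0
      exact one_ne_zero h0
    · exact h
  simp only [Caz]
  set r := 1 / α with hrdef
  have hr0 : 0 < r := by positivity
  have hrα : r * α = 1 := by
    rw [hrdef]
    field_simp
  have hαr : α * r = 1 := by rw [mul_comm]; exact hrα
  have hinv : ∀ x : ℝ, 0 ≤ x → (x ^ r) ^ α = x := by
    intro x hx
    rw [← Real.rpow_mul hx, hrα, Real.rpow_one]
  have hinv' : ∀ x : ℝ, 0 ≤ x → (x ^ α) ^ r = x := by
    intro x hx
    rw [← Real.rpow_mul hx, hαr, Real.rpow_one]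
  set S1 := {x : ℝ | ∃ σ, IsBlockIncoherent P σ ∧
      x = retr (mpow (mpow σ ((1 - α) / (2 * z)) * mpow ρ (α / z) *
        mpow σ ((1 - α) / (2 * z))) z)} with hS1def
  set S2 := {x : ℝ | ∃ σ, IsBlockIncoherent T σ ∧
      x = retr (mpow (mpow σ ((1 - α) / (2 * z)) * mpow τ (α / z) *
        mpow σ ((1 - α) / (2 * z))) z)} with hS2def
  set S3 := {x : ℝ | ∃ σ, IsBlockIncoherent
        (Sum.elim (fun j : K => Matrix.fromBlocks (P j) 0 0 0)
          (fun k : L => Matrix.fromBlocks 0 0 0 (T k))) σ ∧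
      x = retr (mpow (mpow σ ((1 - α) / (2 * z)) * mpow (Matrix.fromBlocks ρ 0 0 τ) (α / z) *
        mpow σ ((1 - α) / (2 * z))) z)} with hS3def
  have hS1nonneg : ∀ x ∈ S1, 0 ≤ x := by
    rintro x ⟨σ, hσ, rfl⟩
    exact (Q_bounds hρ.1 hα hz hσ.1.1 hσ.1.2).1
  have hS2nonneg : ∀ x ∈ S2, 0 ≤ x := by
    rintro x ⟨σ, hσ, rfl⟩
    exact (Q_bounds hτ.1 hα hz hσ.1.1 hσ.1.2).1
  have hS3nonneg : ∀ x ∈ S3, 0 ≤ x := by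
    rintro x ⟨σ, hσ, rfl⟩
    exact (Q_bounds hρτ hα hz hσ.1.1 hσ.1.2).1
  have hbdd1 : BddAbove S1 := by
    refine ⟨(Fintype.card m : ℝ) * (retr (mpow ρ (α / z))) ^ z, ?_⟩
    rintro x ⟨σ, hσ, rfl⟩
    exact (Q_bounds hρ.1 hα hz hσ.1.1 hσ.1.2).2
  have hbdd2 : BddAbove S2 := by
    refine ⟨(Fintype.card p : ℝ) * (retr (mpow τ (α / z))) ^ z, ?_⟩
    rintro x ⟨σ, hσ, rfl⟩
    exact (Q_bounds hτ.1 hα hz hσ.1.1 hσ.1.2).2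
  have hbdd3 : BddAbove S3 := by
    refine ⟨(Fintype.card (m ⊕ p) : ℝ) *
      (retr (mpow (Matrix.fromBlocks ρ 0 0 τ) (α / z))) ^ z, ?_⟩
    rintro x ⟨σ, hσ, rfl⟩
    exact (Q_bounds hρτ hα hz hσ.1.1 hσ.1.2).2
  have hne1 : S1.Nonempty := ⟨_, ⟨_, unif_incoherent hP hm, rfl⟩⟩
  have hne2 : S2.Nonempty := ⟨_, ⟨_, unif_incoherent hT hpp, rfl⟩⟩
  have hcard3 : 0 < Fintype.card (m ⊕ p) := by
    rw [Fintype.card_sum]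
    omega
  have hne3 : S3.Nonempty := ⟨_, ⟨_, unif_incoherent (sumfam_proj hP hT) hcard3, rfl⟩⟩
  have hS3sup0 : 0 ≤ sSup S3 := by
    obtain ⟨c₀, hc₀⟩ := hne3
    exact le_trans (hS3nonneg _ hc₀) (le_csSup hbdd3 hc₀)
  have key : ∀ a ∈ S1, ∀ b ∈ S2, a ^ r + b ^ r ≤ (sSup S3) ^ r := by
    intro a ha b hb
    obtain ⟨σ₁, hσ₁, ha'⟩ := ha
    obtain ⟨σ₂, hσ₂, hb'⟩ := hb
    have ha0 : 0 ≤ a := by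
      rw [ha']
      exact (Q_bounds hρ.1 hα hz hσ₁.1.1 hσ₁.1.2).1
    have hb0 : 0 ≤ b := by
      rw [hb']
      exact (Q_bounds hτ.1 hα hz hσ₂.1.1 hσ₂.1.2).1
    set s := a ^ r + b ^ r with hsdef
    have hs0 : 0 ≤ s := by positivity
    rcases eq_or_lt_of_le hs0 with hsz | hsp
    · rw [← hsz]
      exact Real.rpow_nonneg hS3sup0 r
    · set l := a ^ r / s with hldef
      have hl0 : 0 ≤ l := by positivity
      have hl1 : l ≤ 1 := by
        rw [hldef, div_le_one hsp]
        nlinarith [Real.rpow_nonneg hb0 r]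
      have h1l : 1 - l = b ^ r / s := by
        rw [hldef, hsdef]
        rw [one_sub_div (by rw [← hsdef]; exact hsp.ne')]
        ring
      have hterm : ∀ x : ℝ, 0 ≤ x → (x ^ r / s) ^ (1 - α) * x = x ^ r / s ^ (1 - α) := by
        intro x hx
        rcases eq_or_lt_of_le hx with hxe | hxp
        · rw [← hxe]
          simp [Real.zero_rpow hr0.ne', zero_div, Real.zero_rpow h1a.ne']
        · rw [Real.div_rpow (Real.rpow_nonneg hx r) hsp.le, ← Real.rpow_mul hx,
            div_mul_eq_mul_div, ← Real.rpow_add_one (ne_of_gt hxp)]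
          have hexp : r * (1 - α) + 1 = r := by
            rw [hrdef]
            field_simp
            ring
          rw [hexp]
      have hv : l ^ (1 - α) * a + (1 - l) ^ (1 - α) * b = s ^ α := by
        rw [h1l, hldef, hterm a ha0, hterm b hb0, ← add_div, ← hsdef]
        have hsub : s ^ α = s / s ^ (1 - α) := by
          have h := Real.rpow_sub hsp 1 (1 - α)
          rw [Real.rpow_one, show (1 : ℝ) - (1 - α) = α from by ring] at h
          exact h
        rw [hsub]
      have hmem3 : s ^ α ∈ S3 := by
        refine ⟨Matrix.fromBlocks ((l : ℂ) • σ₁) 0 0 (((1 - l : ℝ) : ℂ) • σ₂),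
          mix_incoherent hσ₁ hσ₂ hl0 hl1, ?_⟩
        rw [Q_mix hα hz hρ.1 hτ.1 hσ₁.1.1 hσ₂.1.1 hl0 hl1, ← ha', ← hb', hv]
      have hle3 : s ^ α ≤ sSup S3 := le_csSup hbdd3 hmem3
      calc s = (s ^ α) ^ r := (hinv' s hs0).symm
        _ ≤ (sSup S3) ^ r := Real.rpow_le_rpow (Real.rpow_nonneg hs0 α) hle3 hr0.le
  obtain ⟨a₀, ha₀⟩ := hne1
  obtain ⟨b₀, hb₀⟩ := hne2
  have hne1 : S1.Nonempty := ⟨a₀, ha₀⟩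
  have hne2 : S2.Nonempty := ⟨b₀, hb₀⟩
  have hsup1 : 0 ≤ sSup S1 := le_trans (hS1nonneg _ ha₀) (le_csSup hbdd1 ha₀)
  have hsup2 : 0 ≤ sSup S2 := le_trans (hS2nonneg _ hb₀) (le_csSup hbdd2 hb₀)
  have stepB : ∀ a ∈ S1, (sSup S2) ^ r ≤ (sSup S3) ^ r - a ^ r := by
    intro a ha
    have ha0 := hS1nonneg a ha
    have hXa : 0 ≤ (sSup S3) ^ r - a ^ r := by
      have hk := key a ha b₀ hb₀
      have hb₀r : 0 ≤ b₀ ^ r := Real.rpow_nonneg (hS2nonneg _ hb₀) r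
      linarith
    have hBle : sSup S2 ≤ ((sSup S3) ^ r - a ^ r) ^ α := by
      apply csSup_le hne2
      intro b hb
      have hb0 := hS2nonneg b hb
      have hk := key a ha b hb
      calc b = (b ^ r) ^ α := (hinv b hb0).symm
        _ ≤ ((sSup S3) ^ r - a ^ r) ^ α :=
          Real.rpow_le_rpow (Real.rpow_nonneg hb0 r) (by linarith) hα0.le
    calc (sSup S2) ^ r ≤ (((sSup S3) ^ r - a ^ r) ^ α) ^ r :=
        Real.rpow_le_rpow hsup2 hBle hr0.le
      _ = (sSup S3) ^ r - a ^ r := hinv' _ hXa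
  have hfin : (sSup S1) ^ r ≤ (sSup S3) ^ r - (sSup S2) ^ r := by
    have hXs : 0 ≤ (sSup S3) ^ r - (sSup S2) ^ r := by
      have h := stepB a₀ ha₀
      have ha₀r : 0 ≤ a₀ ^ r := Real.rpow_nonneg (hS1nonneg _ ha₀) r
      linarith
    have hle : sSup S1 ≤ ((sSup S3) ^ r - (sSup S2) ^ r) ^ α := by
      apply csSup_le hne1
      intro a ha
      have ha0 := hS1nonneg a ha
      have h := stepB a ha
      calc a = (a ^ r) ^ α := (hinv a ha0).symm
        _ ≤ ((sSup S3) ^ r - (sSup S2) ^ r) ^ α :=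
          Real.rpow_le_rpow (Real.rpow_nonneg ha0 r) (by linarith) hα0.le
    calc (sSup S1) ^ r ≤ (((sSup S3) ^ r - (sSup S2) ^ r) ^ α) ^ r :=
        Real.rpow_le_rpow hsup1 hle hr0.le
      _ = (sSup S3) ^ r - (sSup S2) ^ r := hinv' _ hXs
  linarith [hfin]

end BlockCoherence
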